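/- For the randomizer Q with pmf p_Q(y|v) = e^ε/Ω if ⟨y,v⟩ = 1 else 1/Ω, with d ≥ 2 and v(k) = 1: P(Y(k) = 1 | v(k) = 1) = (1/Ω)·C(d−1, m−1)·2^{m−1}·e^ε. -/

import Mathlib

open Finset

/-- The output space `𝒴`: vectors in `{-1,0,1}^d` with exactly `m` nonzero entries. -/
def outputSet (d m : ℕ) : Finset (Fin d → ℤ) :=
  (Fintype.piFinset fun _ : Fin d => ({-1, 0, 1} : Finset ℤ)).filter
    (fun y => (Finset.univ.filter fun i => y i ≠ 0).card = m)

/-- `v` is a signed unit vector: exactly one nonzero entry, which is `1` or `-1`. -/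
def IsSignedUnit {d : ℕ} (v : Fin d → ℤ) : Prop :=
  ∃ k : Fin d, (v k = 1 ∨ v k = -1) ∧ ∀ i, i ≠ k → v i = 0

/-- The pmf of the randomizer: `p_Q(y|v) = e^ε/Ω` if `⟨y,v⟩ = 1` and `1/Ω` otherwise. -/
noncomputable def pQ (d : ℕ) (ε Ω : ℝ) (v y : Fin d → ℤ) : ℝ :=
  if (∑ i, y i * v i) = 1 then Real.exp ε / Ω else 1 / Ω

/-- The normalizing constant `Ω`. -/
noncomputable def Ωval (d m : ℕ) (ε : ℝ) : ℝ :=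
  ((d - 1).choose (m - 1) : ℝ) * 2 ^ (m - 1) * Real.exp ε
    + ((d - 1).choose (m - 1) : ℝ) * 2 ^ (m - 1) + ((d - 1).choose m : ℝ) * 2 ^ m


lemma count_card {α : Type*} [Fintype α] [DecidableEq α] (r : ℕ) :
    ((Fintype.piFinset fun _ : α => ({-1, 0, 1} : Finset ℤ)).filter
      (fun f => (univ.filter fun i => f i ≠ 0).card = r)).card
      = (Fintype.card α).choose r * 2 ^ r := by
  classical
  have h1 : ((univ.powersetCard r).sigma fun s : Finset α =>
      Fintype.piFinset fun i => if i ∈ s then ({-1, 1} : Finset ℤ) else ({0} : Finset ℤ)).card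
      = (Fintype.card α).choose r * 2 ^ r := by
    rw [Finset.card_sigma (univ.powersetCard r)
      (fun s : Finset α => Fintype.piFinset fun i => if i ∈ s then ({-1, 1} : Finset ℤ) else ({0} : Finset ℤ))]
    have h2 : ∀ s ∈ (univ : Finset α).powersetCard r,
        (Fintype.piFinset fun i => if i ∈ s then ({-1, 1} : Finset ℤ) else ({0} : Finset ℤ)).card
          = 2 ^ r := by
      intro s hs
      rw [Fintype.card_piFinset]
      have hsc : s.card = r := (Finset.mem_powersetCard.mp hs).2
      calc ∏ i, (if i ∈ s then ({-1, 1} : Finset ℤ) else ({0} : Finset ℤ)).card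
          = ∏ i, (if i ∈ s then 2 else 1) := by
            refine Finset.prod_congr rfl fun i _ => ?_
            split <;> simp
        _ = ∏ i ∈ univ ∩ s, 2 := Finset.prod_ite_mem univ s (fun _ => 2)
        _ = 2 ^ r := by rw [Finset.univ_inter, Finset.prod_const, hsc]
    rw [Finset.sum_congr rfl h2, Finset.sum_const, Finset.card_powersetCard,
      Finset.card_univ, smul_eq_mul]
  refine Eq.trans ?_ h1
  refine Finset.card_bij' (fun f _ => ⟨univ.filter fun i => f i ≠ 0, f⟩)
    (fun p _ => p.2) ?_ ?_ ?_ ?_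
  · intro f hf
    simp only [Finset.mem_filter, Fintype.mem_piFinset] at hf
    obtain ⟨hf1, hf2⟩ := hf
    simp only [Finset.mem_sigma, Finset.mem_powersetCard, Fintype.mem_piFinset]
    refine ⟨⟨Finset.subset_univ _, hf2⟩, fun i => ?_⟩
    by_cases h : f i = 0
    · simp [h]
    · have := hf1 i
      simp only [Finset.mem_insert, Finset.mem_singleton] at this
      rcases this with h1 | h1 | h1 <;> simp [h, h1]
  · rintro ⟨s, f⟩ hp
    simp only [Finset.mem_sigma, Finset.mem_powersetCard, Fintype.mem_piFinset] at hp
    obtain ⟨⟨_, hsc⟩, hf⟩ := hp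
    have hsupp : (univ.filter fun i => f i ≠ 0) = s := by
      ext i
      have := hf i
      by_cases h : i ∈ s <;> simp only [h, if_true, if_false,
        Finset.mem_insert, Finset.mem_singleton] at this <;>
        simp [h, this] <;> rcases this with h | h <;> simp [h]
    simp only [Finset.mem_filter, Fintype.mem_piFinset, hsupp, hsc, and_true]
    intro i
    have := hf i
    by_cases h : i ∈ s <;> simp only [h, if_true, if_false,
      Finset.mem_insert, Finset.mem_singleton] at this <;>
      simp [Finset.mem_insert, Finset.mem_singleton] <;> tauto
  · intro f hf; rfl
  · rintro ⟨s, f⟩ hp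
    simp only [Finset.mem_sigma, Finset.mem_powersetCard, Fintype.mem_piFinset] at hp
    obtain ⟨⟨_, hsc⟩, hf⟩ := hp
    have hsupp : (univ.filter fun i => f i ≠ 0) = s := by
      ext i
      have := hf i
      by_cases h : i ∈ s <;> simp only [h, if_true, if_false,
        Finset.mem_insert, Finset.mem_singleton] at this <;>
        simp [h, this] <;> rcases this with h | h <;> simp [h]
    subst hsupp
    rfl

lemma restrict_card {d : ℕ} (y : Fin d → ℤ) (k : Fin d) (hyk : y k ≠ 0) :
    (univ.filter fun i => y i ≠ 0).card
      = (univ.filter fun j : {i : Fin d // i ≠ k} => y j.1 ≠ 0).card + 1 := by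
  have hk : k ∈ univ.filter fun i => y i ≠ 0 := by simp [hyk]
  have h1 : ((univ.filter fun i => y i ≠ 0).erase k).card
      = (univ.filter fun j : {i : Fin d // i ≠ k} => y j.1 ≠ 0).card := by
    refine Finset.card_bij' (fun i hi => ⟨i, (Finset.mem_erase.mp hi).1⟩)
      (fun j _ => j.1) ?_ ?_ ?_ ?_
    · intro i hi
      simp only [Finset.mem_erase, Finset.mem_filter] at hi
      simp [hi.2.2]
    · intro j hj
      simp only [Finset.mem_filter] at hj
      simp [j.2, hj.2]
    · intro i hi; rfl
    · intro j hj; rfl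
  rw [← Finset.card_erase_add_one hk, h1]

lemma main_card (d m : ℕ) (hm1 : 1 ≤ m) (k : Fin d) :
    ((outputSet d m).filter fun y => y k = 1).card
      = (d - 1).choose (m - 1) * 2 ^ (m - 1) := by
  classical
  have hc : Fintype.card {i : Fin d // i ≠ k} = d - 1 := by
    simp [Fintype.card_subtype_compl]
  have hcount := count_card (α := {i : Fin d // i ≠ k}) (m - 1)
  rw [hc] at hcount
  rw [← hcount]
  refine Finset.card_bij' (fun y _ => fun j : {i : Fin d // i ≠ k} => y j.1)
    (fun z _ => fun i => if h : i = k then 1 else z ⟨i, h⟩) ?_ ?_ ?_ ?_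
  · intro y hy
    simp only [outputSet, Finset.mem_filter, Fintype.mem_piFinset] at hy
    obtain ⟨⟨h1, h2⟩, h3⟩ := hy
    have hk0 : y k ≠ 0 := by rw [h3]; norm_num
    have hr := restrict_card y k hk0
    simp only [Finset.mem_filter, Fintype.mem_piFinset]
    refine ⟨fun j => h1 j.1, ?_⟩
    simp only [ne_eq] at hr h2 ⊢
    rw [h2] at hr
    rw [hr, Nat.add_sub_cancel]
  · intro z hz
    simp only [Finset.mem_filter, Fintype.mem_piFinset] at hz
    obtain ⟨hz1, hz2⟩ := hz
    have hyk : (fun i => if h : i = k then (1 : ℤ) else z ⟨i, h⟩) k = 1 := dif_pos rfl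
    have hrestr : (univ.filter fun j : {i : Fin d // i ≠ k} =>
        (fun i => if h : i = k then (1 : ℤ) else z ⟨i, h⟩) j.1 ≠ 0)
        = univ.filter fun j : {i : Fin d // i ≠ k} => z j ≠ 0 := by
      apply Finset.filter_congr
      intro j _
      simp [j.2]
    have hr := restrict_card (fun i => if h : i = k then (1 : ℤ) else z ⟨i, h⟩) k
      (by simp)
    rw [hrestr, hz2] at hr
    simp only [outputSet, Finset.mem_filter, Fintype.mem_piFinset]
    refine ⟨⟨?_, ?_⟩, by simp⟩
    · intro i
      by_cases h : i = k
      · simp [h]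
      · simpa [h] using hz1 ⟨i, h⟩
    · simp only [ne_eq] at hr ⊢
      exact hr.trans (Nat.succ_pred_eq_of_pos hm1)
  · intro y hy
    have hyk : y k = 1 := (Finset.mem_filter.mp hy).2
    funext i
    by_cases h : i = k
    · subst h; simp [hyk]
    · simp [h]
  · intro z hz
    funext j
    simp [j.2]


/-- `P(Y(k) = 1 | v(k) = 1) = (1/Ω)·C(d-1,m-1)·2^{m-1}·e^ε`. -/
theorem prob_one_given_one (d m : ℕ) (hd : 2 ≤ d) (hm1 : 1 ≤ m) (hmd : m ≤ d)
    (ε : ℝ) (hε : 0 < ε) (v : Fin d → ℤ) (hv : IsSignedUnit v) (k : Fin d)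
    (hvk : v k = 1) :
    (∑ y ∈ (outputSet d m).filter fun y => y k = 1, pQ d ε (Ωval d m ε) v y)
      = (1 / Ωval d m ε) * ((d - 1).choose (m - 1) : ℝ) * 2 ^ (m - 1) * Real.exp ε := by
  obtain ⟨k', hk'v, hk'0⟩ := hv
  have hzero : ∀ i, i ≠ k → v i = 0 := by
    intro i hi
    have hkk : k' = k := by
      by_contra h
      have := hk'0 k (fun hh => h hh.symm)
      rw [this] at hvk
      exact absurd hvk (by norm_num)
    subst hkk
    exact hk'0 i hi
  have hsum : ∀ y ∈ (outputSet d m).filter (fun y => y k = 1),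
      pQ d ε (Ωval d m ε) v y = Real.exp ε / Ωval d m ε := by
    intro y hy
    have hyk : y k = 1 := (Finset.mem_filter.mp hy).2
    have hinner : (∑ i, y i * v i) = 1 := by
      rw [Finset.sum_eq_single k (fun i _ hi => by rw [hzero i hi, mul_zero])
        (fun h => absurd (Finset.mem_univ k) h), hyk, hvk, mul_one]
    unfold pQ
    rw [if_pos hinner]
  rw [Finset.sum_congr rfl hsum, Finset.sum_const, main_card d m hm1 k]
  simp only [nsmul_eq_mul, Nat.cast_mul, Nat.cast_pow, Nat.cast_ofNat]
  ring
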